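/- In an abelian category A, for a full subcategory S and natural numbers m, n, the class (S)_{m+n} equals (S)_m * (S)_n, where X * Z denotes the class of objects y fitting in a short exact sequence x ↪ y ↠ z with x ∈ X, z ∈ Z. -/

import Mathlib

open CategoryTheory CategoryTheory.Limits

namespace Paper

variable {C : Type*} [Category C] [Abelian C]

/-- Membership in `S ∪ {0}`, up to isomorphism. -/
def MemS0 (S : Set C) (x : C) : Prop :=
  (∃ s ∈ S, Nonempty (x ≅ s)) ∨ IsZero x

/-- `x ∈ (S)ₙ` : `x` admits a filtration `⊥ = c 0 ⊆ ⋯ ⊆ c n = ⊤` of subobjects whose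
successive quotients lie in `S ∪ {0}`. -/
def MemFilt (S : Set C) (n : ℕ) (x : C) : Prop :=
  ∃ (c : Fin (n + 1) → Subobject x) (hc : Monotone c),
    c 0 = ⊥ ∧ c (Fin.last n) = ⊤ ∧
      ∀ i : Fin n,
        MemS0 S
          (cokernel (Subobject.ofLE (c i.castSucc) (c i.succ) (hc (Fin.castSucc_le_succ i))))

/-- The extension closure `⟨S⟩ = ⋃ₙ (S)ₙ`. -/
def ExtClosure (S : Set C) : Set C := {x | ∃ n, MemFilt S n x}

/-- `X * Z` : the objects `y` admitting a short exact sequence `x ↪ y ↠ z` with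
`x ∈ X` and `z ∈ Z`. -/
def SesStar (X Z : Set C) : Set C :=
  {y | ∃ (x z : C) (f : x ⟶ y) (g : y ⟶ z) (w : f ≫ g = 0),
      x ∈ X ∧ z ∈ Z ∧ (ShortComplex.mk f g w).ShortExact}

/-- `Gen S` : quotients of objects of `S`. -/
def GenCl (S : Set C) : Set C := {x | ∃ s ∈ S, ∃ f : s ⟶ x, Epi f}

/-- `Sub S` : subobjects of objects of `S`. -/
def SubCl (S : Set C) : Set C := {x | ∃ s ∈ S, ∃ f : x ⟶ s, Mono f}

/-- `S^⊥` : objects receiving no nonzero morphism from objects of `S`. -/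
def PerpR (S : Set C) : Set C := {x | ∀ s ∈ S, ∀ f : s ⟶ x, f = 0}

/-- `^⊥S` : objects admitting no nonzero morphism to objects of `S`. -/
def PerpL (S : Set C) : Set C := {x | ∀ s ∈ S, ∀ f : x ⟶ s, f = 0}

/-- A class is closed under quotients. -/
def ClosedUnderQuotients (X : Set C) : Prop :=
  ∀ ⦃y a : C⦄ (f : y ⟶ a), Epi f → y ∈ X → a ∈ X

/-- A class is closed under subobjects. -/
def ClosedUnderSubobjects (X : Set C) : Prop :=
  ∀ ⦃a y : C⦄ (f : a ⟶ y), Mono f → y ∈ X → a ∈ X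

/-- A class is closed under isomorphisms (i.e. is a strictly full subcategory). -/
def IsoClosed (X : Set C) : Prop := ∀ ⦃x y : C⦄, (x ≅ y) → x ∈ X → y ∈ X

/-- `(T, F)` is a torsion pair: both classes are strictly full, `Hom(T, F) = 0`,
and every object fits in a short exact sequence `t ↪ x ↠ f` with `t ∈ T`, `f ∈ F`. -/
def IsTorsionPair (Tc F : Set C) : Prop :=
  IsoClosed Tc ∧ IsoClosed F ∧ (∀ t ∈ Tc, ∀ f ∈ F, ∀ g : t ⟶ f, g = 0) ∧
    ∀ y : C, y ∈ SesStar Tc F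

/-- `(S₀, S₁, S₂)` is a torsion triple. -/
def IsTorsionTriple (S₀ S₁ S₂ : Set C) : Prop :=
  IsoClosed S₀ ∧ IsoClosed S₁ ∧ IsoClosed S₂ ∧
    (∀ s ∈ S₀, ∀ t ∈ S₁, ∀ g : s ⟶ t, g = 0) ∧
    (∀ s ∈ S₀, ∀ t ∈ S₂, ∀ g : s ⟶ t, g = 0) ∧
    (∀ s ∈ S₁, ∀ t ∈ S₂, ∀ g : s ⟶ t, g = 0) ∧
    ∀ y : C, y ∈ SesStar S₀ (SesStar S₁ S₂)

end Paper

namespace Paper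

/-- A noetherian abelian category: ascending chains of subobjects stabilise. -/
def NoethCat (C : Type*) [Category C] [Abelian C] : Prop :=
  ∀ (x : C) (f : ℕ →o Subobject x), ∃ n, ∀ m, n ≤ m → f n = f m

end Paper

namespace Paper

variable {C : Type*} [Category C] [Abelian C]

set_option linter.unusedSectionVars false
set_option maxHeartbeats 1000000

attribute [local instance] CategoryTheory.Abelian.Pseudoelement.objectToSort
  CategoryTheory.Abelian.Pseudoelement.homToFun

open CategoryTheory.Abelian CategoryTheory.Abelian.Pseudoelement

lemma memS0_of_iso {S : Set C} {x y : C} (e : x ≅ y) (h : MemS0 S x) : MemS0 S y := by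
  rcases h with ⟨s, hs, ⟨i⟩⟩ | hz
  · exact Or.inl ⟨s, hs, ⟨e.symm ≪≫ i⟩⟩
  · exact Or.inr (hz.of_iso e.symm)

noncomputable def cokerOfLEMkIso {Y X₁ X₂ : C} (g₁ : X₁ ⟶ Y) (g₂ : X₂ ⟶ Y) [Mono g₁] [Mono g₂]
    (t : X₁ ⟶ X₂) (w : t ≫ g₂ = g₁) (h : Subobject.mk g₁ ≤ Subobject.mk g₂) :
    cokernel (Subobject.ofLE _ _ h) ≅ cokernel t :=
  cokernel.mapIso _ t (Subobject.underlyingIso g₁) (Subobject.underlyingIso g₂) (by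
    rw [← cancel_mono g₂]
    simp [w])

noncomputable def cokerOfLETopIso {Y : C} (A : Subobject Y) (h : A ≤ ⊤) :
    cokernel (Subobject.ofLE A ⊤ h) ≅ cokernel A.arrow :=
  cokernel.mapIso _ A.arrow (Iso.refl _) (asIso ((⊤ : Subobject Y).arrow)) (by simp)

noncomputable def cokerMkTopIso {Y X : C} (g : X ⟶ Y) [Mono g] (h : Subobject.mk g ≤ ⊤) :
    cokernel (Subobject.ofLE _ ⊤ h) ≅ cokernel g :=
  cokernel.mapIso _ g (Subobject.underlyingIso g) (asIso ((⊤ : Subobject Y).arrow)) (by simp)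

lemma memS0_coker_congr {S : Set C} {y : C} {A B A' B' : Subobject y} (hA : A = A') (hB : B = B')
    (h : A ≤ B) (h' : A' ≤ B') (hm : MemS0 S (cokernel (Subobject.ofLE A' B' h'))) :
    MemS0 S (cokernel (Subobject.ofLE A B h)) := by
  subst hA; subst hB; exact hm

lemma sesOfMono {x y : C} (f : x ⟶ y) [Mono f] :
    (ShortComplex.mk f (cokernel.π f) (cokernel.condition f)).ShortExact where
  exact := ShortComplex.exact_cokernel f
  mono_f := by dsimp; infer_instance
  epi_g := by dsimp; infer_instance

noncomputable def sesCokernelIso {x y z : C} {f : x ⟶ y} {g : y ⟶ z} {w : f ≫ g = 0}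
    (hS : (ShortComplex.mk f g w).ShortExact) : cokernel f ≅ z :=
  IsColimit.coconePointUniqueUpToIso (cokernelIsCokernel f) hS.gIsCokernel

/-- helper: `s ≅ coker (ofLE (mk (D.arrow ≫ f)) ⊤)` when `D = ⊤`. -/
lemma memS0_coker_mkD {S : Set C} {x y s : C} (f : x ⟶ y) [Mono f] (D : Subobject x)
    (hD : D = ⊤) (h : Subobject.mk (D.arrow ≫ f) ≤ ⊤) {g : y ⟶ s} {w : f ≫ g = 0}
    (hSE : (ShortComplex.mk f g w).ShortExact) (hs : MemS0 S s) :
    MemS0 S (cokernel (Subobject.ofLE _ ⊤ h)) := by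
  subst hD
  have iso1 : cokernel ((⊤ : Subobject x).arrow ≫ f) ≅ cokernel f :=
    cokernel.mapIso _ f (asIso ((⊤ : Subobject x).arrow)) (Iso.refl y) (by simp)
  exact memS0_of_iso ((sesCokernelIso hSE).symm ≪≫ iso1.symm ≪≫ (cokerMkTopIso _ h).symm) hs

lemma memFilt_of_iso {S : Set C} {n : ℕ} {x y : C} (e : x ≅ y) (hx : MemFilt S n x) :
    MemFilt S n y := by
  obtain ⟨c, hc, h0, htop, hq⟩ := hx
  refine ⟨fun i => Subobject.mk ((c i).arrow ≫ e.hom), ?_, ?_, ?_, ?_⟩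
  · intro i j hij
    exact Subobject.mk_le_mk_of_comm (Subobject.ofLE _ _ (hc hij))
      (by rw [← Category.assoc, Subobject.ofLE_arrow])
  · rw [Subobject.mk_eq_bot_iff_zero, h0, Subobject.bot_arrow, zero_comp]
  · have : IsIso ((c (Fin.last n)).arrow) := by rw [htop]; infer_instance
    exact Subobject.mk_eq_top_of_isIso _
  · intro i
    exact memS0_of_iso
      (cokerOfLEMkIso _ _ (Subobject.ofLE _ _ (hc (Fin.castSucc_le_succ i)))
        (by rw [← Category.assoc, Subobject.ofLE_arrow]) _).symm (hq i)

lemma isZero_of_memFilt_zero {S : Set C} {y : C} (h : MemFilt S 0 y) : IsZero y := by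
  obtain ⟨c, -, h0, htop, -⟩ := h
  have e : (⊥ : Subobject y) = ⊤ := by
    rw [← h0, ← htop]
    exact congrArg c (@Subsingleton.elim _ Fin.subsingleton_one _ _)
  have h1 : IsZero ((⊥ : Subobject y) : C) :=
    (isZero_zero C).of_iso Subobject.botCoeIsoZero
  rw [e] at h1
  exact h1.of_iso (asIso (⊤ : Subobject y).arrow).symm

lemma memFilt_zero_of_isZero {S : Set C} {y : C} (h : IsZero y) : MemFilt S 0 y := by
  refine ⟨fun _ => ⊥, monotone_const, rfl, ?_, fun i => i.elim0⟩
  refine le_antisymm le_top (Subobject.le_of_comm 0 ?_)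
  rw [zero_comp]
  exact h.eq_of_tgt _ _

lemma memS0_coker_arrow {S : Set C} {y : C} {A B : Subobject y} (h : A ≤ B) (hB : B = ⊤)
    (hm : MemS0 S (cokernel (Subobject.ofLE A B h))) : MemS0 S (cokernel A.arrow) := by
  subst hB
  exact memS0_of_iso (cokerOfLETopIso A h) hm

lemma memFilt_succ_exists {S : Set C} {n : ℕ} {y : C} (h : MemFilt S (n + 1) y) :
    ∃ (x s : C) (f : x ⟶ y) (g : y ⟶ s) (w : f ≫ g = 0),
      MemFilt S n x ∧ MemS0 S s ∧ (ShortComplex.mk f g w).ShortExact := by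
  obtain ⟨c, hc, h0, htop, hq⟩ := h
  set A := c (Fin.castSucc (Fin.last n)) with hA
  refine ⟨(A : C), cokernel A.arrow, A.arrow, cokernel.π _, cokernel.condition _,
    ?_, ?_, sesOfMono _⟩
  · have hle : ∀ i : Fin (n + 1), c (Fin.castSucc i) ≤ A :=
      fun i => hc (Fin.castSucc_le_castSucc_iff.mpr (Fin.le_last i))
    refine ⟨fun i => Subobject.mk (Subobject.ofLE _ _ (hle i)), ?_, ?_, ?_, ?_⟩
    · intro i j hij
      refine Subobject.mk_le_mk_of_comm
        (Subobject.ofLE _ _ (hc (Fin.castSucc_le_castSucc_iff.mpr hij))) ?_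
      rw [Subobject.ofLE_comp_ofLE]
    · rw [Subobject.mk_eq_bot_iff_zero, ← cancel_mono A.arrow, Subobject.ofLE_arrow, zero_comp]
      rw [Fin.castSucc_zero, h0, Subobject.bot_arrow]
    · have heq : Subobject.ofLE _ _ (hle (Fin.last n)) = 𝟙 ((A : C)) := by
        apply Subobject.eq_of_comp_arrow_eq
        rw [Subobject.ofLE_arrow, Category.id_comp]
      have : IsIso (Subobject.ofLE _ _ (hle (Fin.last n))) := by
        rw [heq]; infer_instance
      exact Subobject.mk_eq_top_of_isIso _
    · intro i
      exact memS0_of_iso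
        (cokerOfLEMkIso _ _
          (Subobject.ofLE (c i.castSucc.castSucc) (c i.succ.castSucc)
            (hc (Fin.castSucc_le_castSucc_iff.mpr (Fin.castSucc_le_succ i))))
          (by rw [Subobject.ofLE_comp_ofLE]) _).symm
        (memS0_coker_congr rfl (congrArg c (Fin.succ_castSucc i)).symm _ _ (hq i.castSucc))
  · exact memS0_coker_arrow (hc (Fin.castSucc_le_succ (Fin.last n))) htop (hq (Fin.last n))

lemma memFilt_succ_of_ses {S : Set C} {n : ℕ} {x s y : C} (f : x ⟶ y) (g : y ⟶ s)
    (w : f ≫ g = 0) (hx : MemFilt S n x) (hs : MemS0 S s)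
    (hSE : (ShortComplex.mk f g w).ShortExact) : MemFilt S (n + 1) y := by
  have hmf : Mono f := hSE.mono_f
  obtain ⟨d, hd, hd0, hdtop, hdq⟩ := hx
  refine ⟨Fin.lastCases ⊤ (fun i => Subobject.mk ((d i).arrow ≫ f)), ?_, ?_, ?_, ?_⟩
  · intro i j hij
    induction j using Fin.lastCases with
    | last =>
      simp only [Fin.lastCases_last]
      exact le_top
    | cast j' =>
      induction i using Fin.lastCases with
      | last => exact absurd (lt_of_le_of_lt hij (Fin.castSucc_lt_last j')) (lt_irrefl _)
      | cast i' =>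
        simp only [Fin.lastCases_castSucc]
        exact Subobject.mk_le_mk_of_comm
          (Subobject.ofLE _ _ (hd (Fin.castSucc_le_castSucc_iff.mp hij)))
          (by rw [← Category.assoc, Subobject.ofLE_arrow])
  · have h00 : (0 : Fin (n + 2)) = Fin.castSucc 0 := (Fin.castSucc_zero).symm
    rw [h00]
    simp only [Fin.lastCases_castSucc]
    rw [Subobject.mk_eq_bot_iff_zero, hd0, Subobject.bot_arrow, zero_comp]
  · simp only [Fin.lastCases_last]
  · intro i
    induction i using Fin.lastCases with
    | last =>
      have hA : (Fin.lastCases (motive := fun _ => Subobject y) ⊤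
          (fun i => Subobject.mk ((d i).arrow ≫ f)) (Fin.last n).castSucc)
          = Subobject.mk ((d (Fin.last n)).arrow ≫ f) := by
        simp only [Fin.lastCases_castSucc]
      have hB : (Fin.lastCases (motive := fun _ => Subobject y) ⊤
          (fun i => Subobject.mk ((d i).arrow ≫ f)) (Fin.last n).succ) = ⊤ := by
        rw [Fin.succ_last]
        simp only [Fin.lastCases_last]
      exact memS0_coker_congr hA hB _ le_top
        (memS0_coker_mkD f (d (Fin.last n)) hdtop le_top hSE hs)
    | cast i' =>
      have hA : (Fin.lastCases (motive := fun _ => Subobject y) ⊤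
          (fun i => Subobject.mk ((d i).arrow ≫ f)) i'.castSucc.castSucc)
          = Subobject.mk ((d i'.castSucc).arrow ≫ f) := by
        simp only [Fin.lastCases_castSucc]
      have hB : (Fin.lastCases (motive := fun _ => Subobject y) ⊤
          (fun i => Subobject.mk ((d i).arrow ≫ f)) i'.castSucc.succ)
          = Subobject.mk ((d i'.succ).arrow ≫ f) := by
        rw [Fin.succ_castSucc]
        simp only [Fin.lastCases_castSucc]
      exact memS0_coker_congr hA hB _
        (Subobject.mk_le_mk_of_comm
          (Subobject.ofLE _ _ (hd (Fin.castSucc_le_succ i')))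
          (by rw [← Category.assoc, Subobject.ofLE_arrow]))
        (memS0_of_iso
          (cokerOfLEMkIso _ _ (Subobject.ofLE _ _ (hd (Fin.castSucc_le_succ i')))
            (by rw [← Category.assoc, Subobject.ofLE_arrow]) _).symm (hdq i'))

local notation:90 f:90 "⟦" a "⟧" => Pseudoelement.pseudoApply f a

/-- Third isomorphism theorem short exact sequence:
`0 → coker f → coker (f ≫ h) → coker h → 0` for monos `f`, `h`. -/
lemma thirdIsoSES {x w y : C} (f : x ⟶ w) (h : w ⟶ y) [Mono f] [Mono h] :
    (ShortComplex.mk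
      (cokernel.map f (f ≫ h) (𝟙 x) h (by simp))
      (cokernel.desc (f ≫ h) (cokernel.π h) (by simp))
      (by rw [← cancel_epi (cokernel.π f)]; simp)).ShortExact := by
  have hm : Mono (cokernel.map f (f ≫ h) (𝟙 x) h (by simp)) := by
    apply mono_of_zero_of_map_zero
    intro a ha
    obtain ⟨w₀, rfl⟩ := pseudo_surjective_of_epi (cokernel.π f) a
    rw [← Pseudoelement.comp_apply, cokernel.π_desc, Pseudoelement.comp_apply] at ha
    obtain ⟨x₀, hx₀⟩ := pseudo_exact_of_exact (ShortComplex.exact_cokernel (f ≫ h)) _ ha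
    rw [Pseudoelement.comp_apply] at hx₀
    have hfw : f⟦x₀⟧ = w₀ := pseudo_injective_of_mono h hx₀
    rw [← hfw, ← Pseudoelement.comp_apply, cokernel.condition, Pseudoelement.zero_apply]
  have he : Epi (cokernel.desc (f ≫ h) (cokernel.π h)
      (by simp : (f ≫ h) ≫ cokernel.π h = 0)) :=
    epi_of_epi_fac (cokernel.π_desc (f ≫ h) (cokernel.π h) (by simp))
  refine ⟨?_⟩
  apply exact_of_pseudo_exact
  intro b hb
  obtain ⟨y₀, rfl⟩ := pseudo_surjective_of_epi (cokernel.π (f ≫ h)) b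
  dsimp at hb ⊢
  rw [← Pseudoelement.comp_apply] at hb
  simp only [cokernel.π_desc] at hb
  obtain ⟨w₀, hw₀⟩ := pseudo_exact_of_exact (ShortComplex.exact_cokernel h) y₀ hb
  refine ⟨(cokernel.π f)⟦w₀⟧, ?_⟩
  rw [← Pseudoelement.comp_apply, cokernel.π_desc, Pseudoelement.comp_apply, hw₀]

/-- Given SES `x ↪ y ↠ q` and `v ↪ q ↠ s`, taking `w := ker (p ≫ t)` yields SES
`x ↪ w ↠ v` and `w ↪ y ↠ s`. -/
lemma sesKernelConstr {x y q v s : C} (fx : x ⟶ y) (p : y ⟶ q) (wp : fx ≫ p = 0)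
    (hS1 : (ShortComplex.mk fx p wp).ShortExact)
    (iv : v ⟶ q) (t : q ⟶ s) (wt : iv ≫ t = 0)
    (hS2 : (ShortComplex.mk iv t wt).ShortExact) :
    (∃ (f' : x ⟶ kernel (p ≫ t)) (h' : kernel (p ≫ t) ⟶ v) (w' : f' ≫ h' = 0),
      (ShortComplex.mk f' h' w').ShortExact) ∧
      (ShortComplex.mk (kernel.ι (p ≫ t)) (p ≫ t) (kernel.condition _)).ShortExact := by
  have hmf : Mono fx := hS1.mono_f
  have hep : Epi p := hS1.epi_g
  have hmv : Mono iv := hS2.mono_f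
  have het : Epi t := hS2.epi_g
  set f' : x ⟶ kernel (p ≫ t) :=
    kernel.lift (p ≫ t) fx (by rw [← Category.assoc, wp, zero_comp]) with hf'
  obtain ⟨h', hh'⟩ := KernelFork.IsLimit.lift' hS2.fIsKernel (kernel.ι (p ≫ t) ≫ p)
    (by rw [Category.assoc, kernel.condition])
  dsimp at hh' h'
  have hfι : f' ≫ kernel.ι (p ≫ t) = fx := kernel.lift_ι _ _ _
  have w' : f' ≫ h' = 0 := by
    rw [← cancel_mono iv, Category.assoc, hh', zero_comp, ← Category.assoc, hfι, wp]
  constructor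
  · refine ⟨f', h', w', ?_⟩
    have hm : Mono f' := by
      have : Mono (f' ≫ kernel.ι (p ≫ t)) := by rw [hfι]; infer_instance
      exact mono_of_mono f' (kernel.ι (p ≫ t))
    have he : Epi h' := by
      apply epi_of_pseudo_surjective
      intro b
      obtain ⟨y₀, hy₀⟩ := pseudo_surjective_of_epi p (iv⟦b⟧)
      have h1 : (p ≫ t)⟦y₀⟧ = 0 := by
        rw [Pseudoelement.comp_apply, hy₀, ← Pseudoelement.comp_apply, wt, Pseudoelement.zero_apply]
      obtain ⟨w₀, hw₀⟩ := pseudo_exact_of_exact (ShortComplex.exact_kernel (p ≫ t)) y₀ h1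
      dsimp at w₀ hw₀
      refine ⟨w₀, pseudo_injective_of_mono iv ?_⟩
      rw [← Pseudoelement.comp_apply, hh', Pseudoelement.comp_apply, hw₀, hy₀]
    refine ⟨?_⟩
    apply exact_of_pseudo_exact
    intro b hb
    dsimp at b hb ⊢
    have h1 : p⟦(kernel.ι (p ≫ t))⟦b⟧⟧ = 0 := by
      rw [← Pseudoelement.comp_apply, ← hh', Pseudoelement.comp_apply, hb, apply_zero]
    obtain ⟨a, ha⟩ := pseudo_exact_of_exact hS1.exact _ h1
    dsimp at a ha
    refine ⟨a, pseudo_injective_of_mono (kernel.ι (p ≫ t)) ?_⟩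
    rw [← Pseudoelement.comp_apply, hfι, ha]
  · have he2 : Epi (p ≫ t) := epi_comp p t
    exact ⟨ShortComplex.exact_kernel (p ≫ t)⟩


/-- `(S)_{m+n} = (S)_m * (S)_n`. -/
theorem statement1 (S : Set C) (m n : ℕ) :
    {y : C | MemFilt S (m + n) y} =
      SesStar {y : C | MemFilt S m y} {y : C | MemFilt S n y} := by
  induction n with
  | zero =>
    ext y
    simp only [Set.mem_setOf_eq, SesStar]
    constructor
    · intro hy
      refine ⟨y, cokernel (𝟙 y), 𝟙 y, cokernel.π _, cokernel.condition _, hy,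
        memFilt_zero_of_isZero ?_, sesOfMono _⟩
      rw [IsZero.iff_id_eq_zero, ← cancel_epi (cokernel.π (𝟙 y)), comp_zero, Category.comp_id,
        ← Category.id_comp (cokernel.π (𝟙 y)), cokernel.condition]
    · rintro ⟨x, z, f, g, w, hx, hz, hSE⟩
      have hzz : IsZero z := isZero_of_memFilt_zero hz
      have hg : g = 0 := hzz.eq_of_tgt _ _
      have h1 : Epi f := hSE.exact.epi_f hg
      have h2 : Mono f := hSE.mono_f
      have h3 : IsIso f := isIso_of_mono_of_epi f
      exact memFilt_of_iso (asIso f) hx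
  | succ n ih =>
    ext y
    constructor
    · intro hy
      obtain ⟨x, s, f, g, w, hx, hs, hSE⟩ := memFilt_succ_exists hy
      have hx' : x ∈ SesStar {y : C | MemFilt S m y} {y : C | MemFilt S n y} := by
        rw [← ih]; exact hx
      obtain ⟨x', v, e, r, we, hx'', hv, hSE1⟩ := hx'
      have hme : Mono e := hSE1.mono_f
      have hmf : Mono f := hSE.mono_f
      refine ⟨x', cokernel (e ≫ f), e ≫ f, cokernel.π _, cokernel.condition _, hx'', ?_,
        sesOfMono _⟩
      refine memFilt_succ_of_ses _ _ _ ?_ ?_ (thirdIsoSES e f)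
      · exact memFilt_of_iso (sesCokernelIso hSE1).symm hv
      · exact memS0_of_iso (sesCokernelIso hSE).symm hs
    · rintro ⟨x, q, fx, p, wp, hx, hq, hSE1⟩
      obtain ⟨v, s, iv, t, wt, hv, hs, hSE2⟩ := memFilt_succ_exists hq
      obtain ⟨⟨f', h', w', hS1'⟩, hS2'⟩ := sesKernelConstr fx p wp hSE1 iv t wt hSE2
      have hw : MemFilt S (m + n) (kernel (p ≫ t)) :=
        (Set.ext_iff.1 ih _).mpr ⟨x, v, f', h', w', hx, hv, hS1'⟩
      exact memFilt_succ_of_ses _ _ _ hw hs hS2'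



end Paper
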